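/- Let e₁, e₂ : Ω → ℝⁿ be differentiable maps which are pointwise orthonormal, and let φ = e₁ ∧ e₂ viewed as a map into Λ²(ℝⁿ) with its standard inner product. Then |∂φ/∂x|² = |∂e₁/∂x|² + |∂e₂/∂x|² − 2(e₁ · ∂e₂/∂x)² for any partial derivative ∂/∂x, and consequently |∇φ|² = |∇e₁|² + |∇e₂|² − 2|⟨de₁, e₂⟩|². -/
import Mathlib


open scoped RealInnerProductSpace

/-- The inner product on Λ²(ℝⁿ) of two simple wedges:
`⟪v₁∧v₂, w₁∧w₂⟫ = (v₁·w₁)(v₂·w₂) − (v₁·w₂)(v₂·w₁)`. -/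
noncomputable def wedgeInner {n : ℕ} (v₁ v₂ w₁ w₂ : EuclideanSpace ℝ (Fin n)) : ℝ :=
  ⟪v₁, w₁⟫ * ⟪v₂, w₂⟫ - ⟪v₁, w₂⟫ * ⟪v₂, w₁⟫

/-- The squared norm in Λ²(ℝⁿ) of `a∧b + c∧d`, expanded by bilinearity. -/
noncomputable def wedgeSumNormSq {n : ℕ} (a b c d : EuclideanSpace ℝ (Fin n)) : ℝ :=
  wedgeInner a b a b + 2 * wedgeInner a b c d + wedgeInner c d c d

/-- Derivative of a locally constant inner product vanishes. -/
lemma inner_fderiv_zero {n : ℕ} {f g : ℝ × ℝ → EuclideanSpace ℝ (Fin n)} {x : ℝ × ℝ}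
    (hf : DifferentiableAt ℝ f x) (hg : DifferentiableAt ℝ g x) {c : ℝ}
    (hc : (fun y => ⟪f y, g y⟫) =ᶠ[nhds x] fun _ => c) (v : ℝ × ℝ) :
    ⟪f x, fderiv ℝ g x v⟫ + ⟪fderiv ℝ f x v, g x⟫ = 0 := by
  have h1 := hf.hasFDerivAt.inner ℝ hg.hasFDerivAt
  have h2 : HasFDerivAt (fun y => ⟪f y, g y⟫) (0 : (ℝ × ℝ) →L[ℝ] ℝ) x :=
    (hasFDerivAt_const c x).congr_of_eventuallyEq hc
  have := h1.unique h2
  have := congrArg (fun L => L v) this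
  simpa [fderivInnerCLM] using this

/-- For a pointwise orthonormal pair `(e₁, e₂)` and `φ = e₁ ∧ e₂`, one has
`|∂φ/∂x|² = |∂e₁/∂x|² + |∂e₂/∂x|² − 2 (e₁ · ∂e₂/∂x)²` for every directional derivative
(`∂φ/∂x = ∂e₁/∂x ∧ e₂ + e₁ ∧ ∂e₂/∂x`), and consequently
`|∇φ|² = |∇e₁|² + |∇e₂|² − 2|⟨de₁,e₂⟩|²`. -/
theorem stmt_2 {n : ℕ} (Ω : Set (ℝ × ℝ)) (hΩ : IsOpen Ω)
    (e₁ e₂ : ℝ × ℝ → EuclideanSpace ℝ (Fin n))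
    (he₁ : ∀ x ∈ Ω, DifferentiableAt ℝ e₁ x)
    (he₂ : ∀ x ∈ Ω, DifferentiableAt ℝ e₂ x)
    (horth : ∀ x ∈ Ω, ⟪e₁ x, e₁ x⟫ = 1 ∧ ⟪e₂ x, e₂ x⟫ = 1 ∧ ⟪e₁ x, e₂ x⟫ = 0) :
    (∀ x ∈ Ω, ∀ v : ℝ × ℝ,
      wedgeSumNormSq (fderiv ℝ e₁ x v) (e₂ x) (e₁ x) (fderiv ℝ e₂ x v)
        = ‖fderiv ℝ e₁ x v‖ ^ 2 + ‖fderiv ℝ e₂ x v‖ ^ 2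
            - 2 * ⟪e₁ x, fderiv ℝ e₂ x v⟫ ^ 2) ∧
    (∀ x ∈ Ω,
      wedgeSumNormSq (fderiv ℝ e₁ x (1, 0)) (e₂ x) (e₁ x) (fderiv ℝ e₂ x (1, 0))
          + wedgeSumNormSq (fderiv ℝ e₁ x (0, 1)) (e₂ x) (e₁ x) (fderiv ℝ e₂ x (0, 1))
        = (‖fderiv ℝ e₁ x (1, 0)‖ ^ 2 + ‖fderiv ℝ e₁ x (0, 1)‖ ^ 2)
            + (‖fderiv ℝ e₂ x (1, 0)‖ ^ 2 + ‖fderiv ℝ e₂ x (0, 1)‖ ^ 2)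
            - 2 * (⟪fderiv ℝ e₁ x (1, 0), e₂ x⟫ ^ 2 + ⟪fderiv ℝ e₁ x (0, 1), e₂ x⟫ ^ 2)) := by
  have main : ∀ x ∈ Ω, ∀ v : ℝ × ℝ,
      wedgeSumNormSq (fderiv ℝ e₁ x v) (e₂ x) (e₁ x) (fderiv ℝ e₂ x v)
        = ‖fderiv ℝ e₁ x v‖ ^ 2 + ‖fderiv ℝ e₂ x v‖ ^ 2
            - 2 * ⟪e₁ x, fderiv ℝ e₂ x v⟫ ^ 2 := by
    intro x hx v
    obtain ⟨h11, h22, h12⟩ := horth x hx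
    have hnhds : Ω ∈ nhds x := hΩ.mem_nhds hx
    have k11 : ⟪e₁ x, fderiv ℝ e₁ x v⟫ + ⟪fderiv ℝ e₁ x v, e₁ x⟫ = 0 :=
      inner_fderiv_zero (he₁ x hx) (he₁ x hx)
        (Filter.eventuallyEq_iff_exists_mem.2 ⟨Ω, hnhds, fun y hy => (horth y hy).1⟩) v
    have k22 : ⟪e₂ x, fderiv ℝ e₂ x v⟫ + ⟪fderiv ℝ e₂ x v, e₂ x⟫ = 0 :=
      inner_fderiv_zero (he₂ x hx) (he₂ x hx)
        (Filter.eventuallyEq_iff_exists_mem.2 ⟨Ω, hnhds, fun y hy => (horth y hy).2.1⟩) v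
    have k12 : ⟪e₁ x, fderiv ℝ e₂ x v⟫ + ⟪fderiv ℝ e₁ x v, e₂ x⟫ = 0 :=
      inner_fderiv_zero (he₁ x hx) (he₂ x hx)
        (Filter.eventuallyEq_iff_exists_mem.2 ⟨Ω, hnhds, fun y hy => (horth y hy).2.2⟩) v
    have c11 : ⟪fderiv ℝ e₁ x v, e₁ x⟫ = 0 := by
      have := real_inner_comm (e₁ x) (fderiv ℝ e₁ x v); linarith
    have c22 : ⟪fderiv ℝ e₂ x v, e₂ x⟫ = 0 := by
      have := real_inner_comm (e₂ x) (fderiv ℝ e₂ x v); linarith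
    have c12 : ⟪fderiv ℝ e₁ x v, e₂ x⟫ = - ⟪e₁ x, fderiv ℝ e₂ x v⟫ := by linarith
    have c21 : ⟪e₂ x, fderiv ℝ e₁ x v⟫ = - ⟪e₁ x, fderiv ℝ e₂ x v⟫ := by
      rw [real_inner_comm]; exact c12
    have c12' : ⟪fderiv ℝ e₂ x v, e₁ x⟫ = ⟪e₁ x, fderiv ℝ e₂ x v⟫ := real_inner_comm _ _
    have n1 : ⟪fderiv ℝ e₁ x v, fderiv ℝ e₁ x v⟫ = ‖fderiv ℝ e₁ x v‖ ^ 2 :=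
      real_inner_self_eq_norm_sq _
    have n2 : ⟪fderiv ℝ e₂ x v, fderiv ℝ e₂ x v⟫ = ‖fderiv ℝ e₂ x v‖ ^ 2 :=
      real_inner_self_eq_norm_sq _
    simp only [wedgeSumNormSq, wedgeInner, h11, h22, h12, c11, c22, c12, c21, c12', n1, n2]
    rw [show ⟪e₂ x, e₁ x⟫ = (0:ℝ) from (real_inner_comm _ _).trans h12]
    ring
  refine ⟨main, fun x hx => ?_⟩
  have h1 := main x hx (1, 0)
  have h2 := main x hx (0, 1)
  obtain ⟨_, _, h12⟩ := horth x hx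
  have hnhds : Ω ∈ nhds x := hΩ.mem_nhds hx
  have k1 : ⟪e₁ x, fderiv ℝ e₂ x (1,0)⟫ + ⟪fderiv ℝ e₁ x (1,0), e₂ x⟫ = 0 :=
    inner_fderiv_zero (he₁ x hx) (he₂ x hx)
      (Filter.eventuallyEq_iff_exists_mem.2 ⟨Ω, hnhds, fun y hy => (horth y hy).2.2⟩) _
  have k2 : ⟪e₁ x, fderiv ℝ e₂ x (0,1)⟫ + ⟪fderiv ℝ e₁ x (0,1), e₂ x⟫ = 0 :=
    inner_fderiv_zero (he₁ x hx) (he₂ x hx)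
      (Filter.eventuallyEq_iff_exists_mem.2 ⟨Ω, hnhds, fun y hy => (horth y hy).2.2⟩) _
  have e1 : ⟪fderiv ℝ e₁ x (1,0), e₂ x⟫ = - ⟪e₁ x, fderiv ℝ e₂ x (1,0)⟫ := by linarith
  have e2 : ⟪fderiv ℝ e₁ x (0,1), e₂ x⟫ = - ⟪e₁ x, fderiv ℝ e₂ x (0,1)⟫ := by linarith
  rw [h1, h2, e1, e2]; ring
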